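/- From an almost blue path to a long blue cycle: let k ≥ 3 be odd and let H be an almost blue path on t ≥ 2k vertices. Let 𝒞 be the family of all cycles of length at least (t − k)/2 and at most t. Then r̃_H(C_k, 𝒞) ≤ k + 1: within k + 1 rounds Builder can force a red C_k or a blue cycle from 𝒞. -/

import Mathlib

open SimpleGraph

/-- A board state: the set of red edges and the set of blue edges. -/
abbrev Board : Type := Set (Sym2 ℕ) × Set (Sym2 ℕ)

/-- The set of already colored edges of a board. -/
def Board.colored (B : Board) : Set (Sym2 ℕ) := B.1 ∪ B.2

/-- A Builder strategy selects an edge given the current board. -/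
abbrev BuilderStrat : Type := Board → Sym2 ℕ

/-- A Painter strategy colors the selected edge (true = red, false = blue). -/
abbrev PainterStrat : Type := Board → Sym2 ℕ → Bool

/-- The board after `t` rounds of play from `init`. -/
def playGame (b : BuilderStrat) (p : PainterStrat) (init : Board) : ℕ → Board
  | 0 => init
  | t + 1 =>
      let B := playGame b p init t
      let e := b B
      if p B e then (insert e B.1, B.2) else (B.1, insert e B.2)

/-- Builder's strategy is valid from `init`: along any play it always selects a
previously unselected non-loop edge. -/
def ValidFrom (b : BuilderStrat) (init : Board) : Prop :=
  ∀ p : PainterStrat, ∀ t : ℕ,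
    ¬ (b (playGame b p init t)).IsDiag ∧
      b (playGame b p init t) ∉ (playGame b p init t).colored

/-- Builder can force the winning condition `W` within `t` rounds, starting from `init`. -/
def BuilderWinsIn (init : Board) (W : Board → Prop) (t : ℕ) : Prop :=
  ∃ b : BuilderStrat, ValidFrom b init ∧
    ∀ p : PainterStrat, ∃ s, s ≤ t ∧ W (playGame b p init s)

/-- `G` contains a copy of `H`. -/
def HasCopy {α β : Type} (H : SimpleGraph α) (G : SimpleGraph β) : Prop :=
  ∃ f : α ↪ β, ∀ x y, H.Adj x y → G.Adj (f x) (f y)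

/-- The red part of the board contains a copy of `H`. -/
def RedCopy {α : Type} (H : SimpleGraph α) (B : Board) : Prop :=
  HasCopy H (fromEdgeSet B.1)

/-- The blue part of the board contains a copy of `H`. -/
def BlueCopy {α : Type} (H : SimpleGraph α) (B : Board) : Prop :=
  HasCopy H (fromEdgeSet B.2)

/-- The empty board. -/
def emptyBoard : Board := (∅, ∅)

/-- Winning condition: a red `C_k` or a blue `C_n`. -/
def WinCC (k n : ℕ) (B : Board) : Prop :=
  RedCopy (cycleGraph k) B ∨ BlueCopy (cycleGraph n) B

/-- Winning condition: a red `C_k` or a blue path on `n` vertices. -/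
def WinCP (k n : ℕ) (B : Board) : Prop :=
  RedCopy (cycleGraph k) B ∨ BlueCopy (pathGraph n) B

/-- A board consisting of a single blue cycle on the vertices `0, …, m-1`. -/
def blueCycleBoard (m : ℕ) : Board :=
  (∅, {e | ∃ i : ℕ, i < m ∧ e = s(i, (i + 1) % m)})

/-- A board consisting of a single blue path on the vertices `0, …, m-1`. -/
def bluePathBoard (m : ℕ) : Board :=
  (∅, {e | ∃ i : ℕ, i + 1 < m ∧ e = s(i, i + 1)})

lemma fin_sub_one {ℓ : ℕ} (hl : 3 ≤ ℓ) {u v : Fin ℓ} (h : ((u - v : Fin ℓ)).val = 1) :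
    u.val = v.val + 1 ∨ (v.val = ℓ - 1 ∧ u.val = 0) := by
  rw [Fin.sub_def] at h
  simp only at h
  have hu := u.isLt; have hv := v.isLt
  rcases Nat.lt_or_ge (ℓ - v.val + u.val) ℓ with hlt | hge
  · rw [Nat.mod_eq_of_lt hlt] at h; omega
  · rw [Nat.mod_eq_sub_mod hge, Nat.mod_eq_of_lt (by omega)] at h; omega

lemma fin_cycle_adj {ℓ : ℕ} (hl : 3 ≤ ℓ) {u v : Fin ℓ} (h : (cycleGraph ℓ).Adj u v) :
    (v.val = u.val + 1) ∨ (u.val = v.val + 1) ∨ (u.val = 0 ∧ v.val = ℓ - 1) ∨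
      (v.val = 0 ∧ u.val = ℓ - 1) := by
  rw [cycleGraph_adj'] at h
  rcases h with h | h
  · rcases fin_sub_one hl h with h' | h' <;> omega
  · rcases fin_sub_one hl h with h' | h' <;> omega

theorem cycle_copy (E : Set (Sym2 ℕ)) (ℓ : ℕ) (hl : 3 ≤ ℓ) (f : ℕ → ℕ)
    (hinj : ∀ i j, i < ℓ → j < ℓ → f i = f j → i = j)
    (hedge : ∀ i, i + 1 < ℓ → s(f i, f (i+1)) ∈ E)
    (hclose : s(f (ℓ-1), f 0) ∈ E) :
    HasCopy (cycleGraph ℓ) (fromEdgeSet E) := by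
  refine ⟨⟨fun x => f x.val, ?_⟩, ?_⟩
  · intro a b hab
    exact Fin.ext (hinj _ _ a.isLt b.isLt hab)
  · intro x y hxy
    have hne : f x.val ≠ f y.val := by
      intro he
      exact (cycleGraph ℓ).ne_of_adj hxy (Fin.ext (hinj _ _ x.isLt y.isLt he))
    rw [fromEdgeSet_adj]
    refine ⟨?_, hne⟩
    show s(f x.val, f y.val) ∈ E
    rcases fin_cycle_adj hl hxy with h | h | h | h
    · have : y.val = x.val + 1 := h
      rw [this]; exact hedge _ (by have := y.isLt; omega)
    · have := hedge y.val (by have := x.isLt; omega)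
      rw [← h] at this; rw [Sym2.eq_swap]; exact this
    · rw [h.1, h.2, Sym2.eq_swap]; exact hclose
    · rw [h.1, h.2]; exact hclose

/-- A blue cycle obtained from a blue path `π a, π (a+1), …, π b` plus the chord
`π a – π b`. -/
lemma blue_cycle_exists (E : Set (Sym2 ℕ)) (π : ℕ → ℕ) (T t k a b : ℕ)
    (hab : a + 2 ≤ b) (hbT : b < T)
    (hinj : ∀ i j, i < T → j < T → π i = π j → i = j)
    (hpath : ∀ i, a ≤ i → i + 1 ≤ b → s(π i, π (i+1)) ∈ E)
    (hchord : s(π a, π b) ∈ E)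
    (h1 : t - k ≤ 2 * (b - a + 1)) (h2 : b - a + 1 ≤ t) :
    ∃ ℓ, 3 ≤ ℓ ∧ t - k ≤ 2 * ℓ ∧ ℓ ≤ t ∧ HasCopy (cycleGraph ℓ) (fromEdgeSet E) := by
  refine ⟨b - a + 1, by omega, h1, h2, ?_⟩
  apply cycle_copy E (b - a + 1) (by omega) (fun i => π (a + i))
  · intro i j hi hj hij
    have := hinj (a+i) (a+j) (by omega) (by omega) hij
    omega
  · intro i hi
    have : a + (i+1) = (a+i) + 1 := by omega
    rw [this]
    exact hpath (a+i) (by omega) (by omega)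
  · have h3 : a + (b - a + 1 - 1) = b := by omega
    have h4 : a + 0 = a := by omega
    rw [h3, h4, Sym2.eq_swap]
    exact hchord

lemma sym2_pi_eq (π : ℕ → ℕ) (T : ℕ)
    (hinj : ∀ i j, i < T → j < T → π i = π j → i = j)
    {a b c d : ℕ} (ha : a < T) (hb : b < T) (hc : c < T) (hd : d < T)
    (h : s(π a, π b) = s(π c, π d)) : (a = c ∧ b = d) ∨ (a = d ∧ b = c) := by
  rw [Sym2.mk_eq_mk_iff (p := (π a, π b)) (q := (π c, π d))] at h
  rcases h with h | h <;> simp only [Prod.mk.injEq, Prod.swap_prod_mk] at h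
  · exact Or.inl ⟨hinj _ _ ha hc h.1, hinj _ _ hb hd h.2⟩
  · exact Or.inr ⟨hinj _ _ ha hd h.1, hinj _ _ hb hc h.2⟩

open Classical in
/-- The dummy edges used after the plan is exhausted. -/
noncomputable def dumEdge (N j : ℕ) : Sym2 ℕ := s(N + 2*j, N + 2*j + 1)

open Classical in
/-- Builder strategy: play `e0`; if painter made it red, play the list `Lr` in
order, else the list `Lb`; afterwards play fresh dummy edges. -/
noncomputable def theStrat (e0 : Sym2 ℕ) (Lr Lb : List (Sym2 ℕ)) (N : ℕ) (B : Board) :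
    Sym2 ℕ :=
    if e0 ∈ Board.colored B then
      match (if e0 ∈ B.1 then Lr else Lb).find? (fun e => decide (e ∉ Board.colored B)) with
      | some e => e
      | none => dumEdge N (sInf {j | dumEdge N j ∉ Board.colored B})
    else e0

lemma dumEdge_inj (N : ℕ) : Function.Injective (dumEdge N) := by
  intro i j h
  rw [dumEdge, dumEdge, Sym2.mk_eq_mk_iff (p := (N + 2*i, N + 2*i + 1)) (q := (N + 2*j, N + 2*j + 1))] at h
  rcases h with h | h <;> (simp only [Prod.mk.injEq, Prod.swap_prod_mk] at h; omega)

lemma dumEdge_not_isDiag (N j : ℕ) : ¬ (dumEdge N j).IsDiag := by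
  rw [dumEdge, Sym2.isDiag_iff_proj_eq]; omega

lemma colored_finite (b : BuilderStrat) (p : PainterStrat) (init : Board)
    (hfin : (Board.colored init).Finite) (n : ℕ) :
    (Board.colored (playGame b p init n)).Finite := by
  induction n with
  | zero => exact hfin
  | succ n ih =>
    show (Board.colored (let B := playGame b p init n; let e := b B;
      if p B e then (insert e B.1, B.2) else (B.1, insert e B.2))).Finite
    simp only
    split <;>
    · simp only [Board.colored] at *
      refine Set.Finite.subset (Set.Finite.insert (b (playGame b p init n)) ih) ?_
      intro x hx
      simp only [Set.mem_union, Set.mem_insert_iff] at *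
      tauto

lemma exists_dum (N : ℕ) (B : Board) (hfin : (Board.colored B).Finite) :
    dumEdge N (sInf {j | dumEdge N j ∉ Board.colored B}) ∉ Board.colored B := by
  have hne : {j | dumEdge N j ∉ Board.colored B}.Nonempty := by
    by_contra hc
    rw [Set.not_nonempty_iff_eq_empty] at hc
    have : Set.range (dumEdge N) ⊆ Board.colored B := by
      rintro x ⟨j, rfl⟩
      by_contra hj
      have : j ∈ {j | dumEdge N j ∉ Board.colored B} := hj
      rw [hc] at this; exact this
    exact Set.infinite_range_of_injective (dumEdge_inj N) (Set.Finite.subset hfin this)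
  exact Nat.sInf_mem hne

lemma theStrat_valid (e0 : Sym2 ℕ) (Lr Lb : List (Sym2 ℕ)) (N : ℕ) (init : Board)
    (hfin : (Board.colored init).Finite)
    (h0d : ¬ e0.IsDiag)
    (hLd : ∀ e, e ∈ Lr ∨ e ∈ Lb → ¬ e.IsDiag) :
    ValidFrom (theStrat e0 Lr Lb N) init := by
  intro p n
  set B := playGame (theStrat e0 Lr Lb N) p init n with hB
  have hfinB : (Board.colored B).Finite := colored_finite _ _ _ hfin n
  rw [theStrat]
  split
  · rename_i h0
    split
    · rename_i e hfind
      have hmem := List.mem_of_find?_eq_some hfind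
      have hprop := List.find?_some hfind
      simp only [decide_eq_true_eq] at hprop
      refine ⟨hLd e ?_, hprop⟩
      split at hmem
      · exact Or.inl hmem
      · exact Or.inr hmem
    · exact ⟨dumEdge_not_isDiag _ _, exists_dum N B hfinB⟩
  · rename_i h0
    exact ⟨h0d, h0⟩

lemma find?_eq_get {α : Type} (p : α → Bool) (L : List α) (j : ℕ) (hj : j < L.length)
    (hbef : ∀ i, i < j → ∃ hi : i < L.length, p (L.get ⟨i, hi⟩) = false)
    (hat : p (L.get ⟨j, hj⟩) = true) : L.find? p = some (L.get ⟨j, hj⟩) := by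
  induction L generalizing j with
  | nil => simp at hj
  | cons a tl ih =>
    cases j with
    | zero =>
      simp only [List.get] at hat
      rw [List.find?_cons_of_pos hat]; rfl
    | succ j =>
      have ha : p a = false := by
        obtain ⟨_, h⟩ := hbef 0 (Nat.succ_pos j); exact h
      rw [List.find?_cons_of_neg (l := tl) (by simp [ha] : ¬p a)]
      have := ih j (by simpa using hj) (fun i hi => by
        obtain ⟨hi', h⟩ := hbef (i+1) (by omega)
        exact ⟨by simpa using hi', h⟩) (by simpa using hat)
      simpa using this

lemma take_succ_set {α : Type} (L : List α) (j : ℕ) (hj : j < L.length) :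
    {e | e ∈ L.take (j+1)} = {e | e ∈ L.take j} ∪ {L.get ⟨j, hj⟩} := by
  ext e
  simp only [Set.mem_setOf_eq, Set.mem_union, Set.mem_singleton_iff]
  rw [List.take_succ, List.getElem?_eq_getElem hj]
  simp only [List.mem_append, Option.toList_some, List.mem_singleton, List.get_eq_getElem]

lemma not_mem_take_self {α : Type} (L : List α) (hnd : L.Nodup) (j : ℕ) (hj : j < L.length) :
    L.get ⟨j, hj⟩ ∉ L.take j := by
  intro hmem
  have hsub : List.Sublist (L.take (j+1)) L := List.take_sublist _ _
  have hnd' : (L.take (j+1)).Nodup := hnd.sublist hsub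
  rw [List.take_succ] at hnd'
  simp only [List.getElem?_eq_getElem hj] at hnd'
  rw [List.nodup_append] at hnd'
  exact hnd'.2.2 _ hmem (L.get ⟨j, hj⟩) (by simp [List.get_eq_getElem]) rfl



lemma playGame_succ (b : BuilderStrat) (p : PainterStrat) (init : Board) (n : ℕ) :
    playGame b p init (n+1) =
      if p (playGame b p init n) (b (playGame b p init n))
      then (insert (b (playGame b p init n)) (playGame b p init n).1, (playGame b p init n).2)
      else ((playGame b p init n).1, insert (b (playGame b p init n)) (playGame b p init n).2) :=
  rfl


section SetShuffle
variable {α : Type} (A E E' B T X : Set α) (g : α)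

lemma union_shuffle (hXT : X ⊆ T) :
    ((A ∪ E) ∪ (T \ X)) ∪ ((B ∪ E') ∪ X) = ((A ∪ B) ∪ (E ∪ E')) ∪ (T ∪ X) := by
  ext x
  have h := @hXT x
  simp only [Set.mem_union, Set.mem_diff]
  by_cases hX : x ∈ X <;> by_cases hT : x ∈ T <;> tauto

lemma red_shuffle (hg : g ∉ X) :
    insert g ((A ∪ E) ∪ (T \ X)) = (A ∪ E) ∪ ((T ∪ {g}) \ X) := by
  ext x
  simp only [Set.mem_insert_iff, Set.mem_union, Set.mem_diff, Set.mem_singleton_iff]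
  constructor
  · rintro (rfl | h)
    · right; exact ⟨Or.inr rfl, hg⟩
    · tauto
  · rintro (h | ⟨h | h, hx⟩) <;> tauto

lemma blue_shuffle1 (hg : g ∉ T) :
    (A ∪ E) ∪ (T \ X) = (A ∪ E) ∪ ((T ∪ {g}) \ insert g X) := by
  ext x
  simp only [Set.mem_union, Set.mem_diff, Set.mem_singleton_iff, Set.mem_insert_iff]
  constructor
  · rintro (h | ⟨h, hx⟩)
    · tauto
    · have : x ≠ g := fun he => hg (he ▸ h)
      tauto
  · rintro (h | ⟨h | h, hx⟩) <;> tauto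

lemma blue_shuffle2 :
    insert g ((B ∪ E) ∪ X) = (B ∪ E) ∪ insert g X := by
  ext x
  simp only [Set.mem_insert_iff, Set.mem_union]
  tauto

end SetShuffle

lemma run_lemma (init : Board) (e0 : Sym2 ℕ) (Lr Lb : List (Sym2 ℕ)) (N : ℕ)
    (p : PainterStrat) (E0r E0b : Set (Sym2 ℕ)) (L : List (Sym2 ℕ))
    (hcase : (E0r = {e0} ∧ E0b = ∅ ∧ L = Lr) ∨ (E0r = ∅ ∧ E0b = {e0} ∧ L = Lb))
    (h0c : e0 ∉ Board.colored init)
    (hfresh : ∀ e, e ∈ L → e ∉ Board.colored init ∧ e ≠ e0)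
    (hnd : L.Nodup)
    (hrep1 : playGame (theStrat e0 Lr Lb N) p init 1 = (init.1 ∪ E0r, init.2 ∪ E0b)) :
    ∀ j, j ≤ L.length → ∃ X, X ⊆ {e | e ∈ L.take j} ∧
      playGame (theStrat e0 Lr Lb N) p init (1+j) =
        ((init.1 ∪ E0r) ∪ ({e | e ∈ L.take j} \ X), (init.2 ∪ E0b) ∪ X) := by
  classical
  have he0 : e0 ∈ E0r ∪ E0b := by
    rcases hcase with ⟨h1, h2, _⟩ | ⟨h1, h2, _⟩ <;> rw [h1, h2] <;> simp
  have hE0sub : E0r ∪ E0b ⊆ {e0} := by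
    rcases hcase with ⟨h1, h2, _⟩ | ⟨h1, h2, _⟩ <;> rw [h1, h2] <;> simp
  set b := theStrat e0 Lr Lb N with hb
  intro j
  induction j with
  | zero =>
    intro _
    refine ⟨∅, by simp, ?_⟩
    rw [hrep1]
    simp
  | succ j ih =>
    intro hj
    obtain ⟨X, hXsub, hrep⟩ := ih (by omega)
    have hjlt : j < L.length := by omega
    set B := playGame b p init (1+j) with hB
    have hB1 : B.1 = (init.1 ∪ E0r) ∪ ({e | e ∈ L.take j} \ X) := by rw [hrep]
    have hB2 : B.2 = (init.2 ∪ E0b) ∪ X := by rw [hrep]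
    have htake_sub : ∀ e, e ∈ L.take j → e ∈ L := fun e he => List.mem_of_mem_take he
    have hcolored : Board.colored B = (Board.colored init ∪ (E0r ∪ E0b)) ∪
        ({e | e ∈ L.take j} ∪ X) := by
      rw [Board.colored, hB1, hB2, Board.colored]
      exact union_shuffle init.1 E0r E0b init.2 {e | e ∈ L.take j} X hXsub
    have he0col : e0 ∈ Board.colored B := by
      rw [hcolored]; left; right; exact he0
    have hbranch : (if e0 ∈ B.1 then Lr else Lb) = L := by
      rcases hcase with ⟨h1, _, h2⟩ | ⟨h1, _, h2⟩
      · rw [if_pos, h2]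
        rw [hB1, h1]; left; right; rfl
      · rw [if_neg, h2]
        rw [hB1, h1]
        rintro ((h | h) | ⟨h, _⟩)
        · exact h0c (Or.inl h)
        · exact h
        · exact (hfresh _ (htake_sub _ h)).2 rfl
    have hgetL : L.get ⟨j, hjlt⟩ ∈ L := List.get_mem L _
    have hfind : (if e0 ∈ B.1 then Lr else Lb).find?
        (fun e => decide (e ∉ Board.colored B)) = some (L.get ⟨j, hjlt⟩) := by
      rw [hbranch]
      apply find?_eq_get
      · intro i hi
        refine ⟨by omega, ?_⟩
        simp only [decide_eq_false_iff_not, Decidable.not_not]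
        rw [hcolored]
        right; left
        show L.get ⟨i, by omega⟩ ∈ L.take j
        rw [List.mem_take_iff_getElem]
        exact ⟨i, by omega, by simp [List.get_eq_getElem]⟩
      · simp only [decide_eq_true_eq]
        rw [hcolored]
        rintro ((h | h) | (h | h))
        · exact (hfresh _ hgetL).1 h
        · exact (hfresh _ hgetL).2 (hE0sub h)
        · exact not_mem_take_self L hnd j hjlt h
        · exact not_mem_take_self L hnd j hjlt (hXsub h)
    have hmove : b B = L.get ⟨j, hjlt⟩ := by
      rw [hb, theStrat, if_pos he0col, hfind]
    have hset : {e | e ∈ L.take (j+1)} = {e | e ∈ L.take j} ∪ {L.get ⟨j, hjlt⟩} :=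
      take_succ_set L j hjlt
    have hnotin : L.get ⟨j, hjlt⟩ ∉ {e | e ∈ L.take j} := not_mem_take_self L hnd j hjlt
    have hnotinX : L.get ⟨j, hjlt⟩ ∉ X := fun h => hnotin (hXsub h)
    rw [show 1 + (j+1) = (1+j) + 1 by omega, playGame_succ, ← hB, hmove]
    by_cases hpc : p B (L.get ⟨j, hjlt⟩)
    · -- painted red
      refine ⟨X, ?_, ?_⟩
      · intro e he; rw [hset]; left; exact hXsub he
      · rw [if_pos hpc]
        have h1 : insert (L.get ⟨j, hjlt⟩) B.1 =
            (init.1 ∪ E0r) ∪ ({e | e ∈ L.take (j+1)} \ X) := by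
          rw [hB1, hset]
          exact red_shuffle init.1 E0r {e | e ∈ L.take j} X _ hnotinX
        rw [Prod.mk.injEq]
        exact ⟨h1, hB2⟩
    · -- painted blue
      refine ⟨insert (L.get ⟨j, hjlt⟩) X, ?_, ?_⟩
      · intro e he
        rw [hset]
        rcases he with he | he
        · right; exact he
        · left; exact hXsub he
      · rw [if_neg hpc]
        have h1 : B.1 = (init.1 ∪ E0r) ∪
            ({e | e ∈ L.take (j+1)} \ insert (L.get ⟨j, hjlt⟩) X) := by
          rw [hB1, hset]
          exact blue_shuffle1 init.1 E0r {e | e ∈ L.take j} X _ hnotin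
        have h2 : insert (L.get ⟨j, hjlt⟩) B.2 =
            (init.2 ∪ E0b) ∪ insert (L.get ⟨j, hjlt⟩) X := by
          rw [hB2]
          exact blue_shuffle2 E0b init.2 X _
        rw [Prod.mk.injEq]
        exact ⟨h1, h2⟩

theorem master (init : Board) (W : Board → Prop)
    (hfin : (Board.colored init).Finite)
    (e0 : Sym2 ℕ) (Lr Lb : List (Sym2 ℕ)) (N : ℕ)
    (h0d : ¬ e0.IsDiag) (h0c : e0 ∉ Board.colored init)
    (hLd : ∀ e, e ∈ Lr ∨ e ∈ Lb → ¬ e.IsDiag)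
    (hLfresh : ∀ e, e ∈ Lr ∨ e ∈ Lb → e ∉ Board.colored init ∧ e ≠ e0)
    (hrnd : Lr.Nodup) (hbnd : Lb.Nodup)
    (HWr : ∀ X ⊆ {e | e ∈ Lr}, W ((init.1 ∪ {e0}) ∪ ({e | e ∈ Lr} \ X), init.2 ∪ X))
    (HWb : ∀ X ⊆ {e | e ∈ Lb}, W (init.1 ∪ ({e | e ∈ Lb} \ X), (init.2 ∪ {e0}) ∪ X)) :
    BuilderWinsIn init W (1 + max Lr.length Lb.length) := by
  classical
  refine ⟨theStrat e0 Lr Lb N, theStrat_valid e0 Lr Lb N init hfin h0d hLd, ?_⟩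
  intro p
  have hstep0 : theStrat e0 Lr Lb N init = e0 := by
    rw [theStrat, if_neg h0c]
  have hrep1 : playGame (theStrat e0 Lr Lb N) p init 1 =
      if p init e0 then (insert e0 init.1, init.2) else (init.1, insert e0 init.2) := by
    have h00 : playGame (theStrat e0 Lr Lb N) p init 0 = init := rfl
    rw [playGame_succ, h00, hstep0]
  by_cases hpc : p init e0
  · -- first move red : branch Lr
    have hrep1' : playGame (theStrat e0 Lr Lb N) p init 1 = (init.1 ∪ {e0}, init.2 ∪ ∅) := by
      rw [hrep1, if_pos hpc, Set.insert_eq, Set.union_comm {e0} init.1, Set.union_empty]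
    obtain ⟨X, hXsub, hrep⟩ := run_lemma init e0 Lr Lb N p {e0} ∅ Lr
      (Or.inl ⟨rfl, rfl, rfl⟩) h0c (fun e he => hLfresh e (Or.inl he)) hrnd hrep1'
      Lr.length le_rfl
    refine ⟨1 + Lr.length, by omega, ?_⟩
    rw [List.take_length] at hXsub hrep
    rw [hrep, Set.union_empty]
    exact HWr X hXsub
  · -- first move blue : branch Lb
    have hrep1' : playGame (theStrat e0 Lr Lb N) p init 1 = (init.1 ∪ ∅, init.2 ∪ {e0}) := by
      rw [hrep1, if_neg hpc, Set.insert_eq, Set.union_comm {e0} init.2, Set.union_empty]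
    obtain ⟨X, hXsub, hrep⟩ := run_lemma init e0 Lr Lb N p ∅ {e0} Lb
      (Or.inr ⟨rfl, rfl, rfl⟩) h0c (fun e he => hLfresh e (Or.inr he)) hbnd hrep1'
      Lb.length le_rfl
    refine ⟨1 + Lb.length, by omega, ?_⟩
    rw [List.take_length] at hXsub hrep
    rw [hrep, Set.union_empty]
    exact HWb X hXsub

lemma wins_mono (init : Board) (W : Board → Prop) {a b : ℕ} (h : a ≤ b) :
    BuilderWinsIn init W a → BuilderWinsIn init W b := by
  rintro ⟨st, hv, hw⟩
  refine ⟨st, hv, fun p => ?_⟩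
  obtain ⟨s, h1, h2⟩ := hw p
  exact ⟨s, by omega, h2⟩

/-- Case α : the board contains a fully blue path `π 0, …, π (T-1)` on `T ≥ t-1`
vertices, and every pair at distance ≥ 2 along it is unplayed. -/
lemma case_alpha (k t T : ℕ) (hk : 3 ≤ k) (hko : Odd k) (ht : 2*k ≤ t) (hTt : T ≤ t)
    (htT : t ≤ T + 1)
    (init : Board) (hfin : (Board.colored init).Finite)
    (π : ℕ → ℕ)
    (hinj : ∀ i j, i < T → j < T → π i = π j → i = j)
    (hblue : ∀ i, i + 1 < T → s(π i, π (i+1)) ∈ init.2)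
    (hfresh : ∀ a b, a < T → b < T → a + 2 ≤ b → s(π a, π b) ∉ Board.colored init) :
    BuilderWinsIn init (fun B => RedCopy (cycleGraph k) B ∨
      ∃ ℓ, 3 ≤ ℓ ∧ t - k ≤ 2*ℓ ∧ ℓ ≤ t ∧ BlueCopy (cycleGraph ℓ) B) (k+1) := by
  have hk2 : k % 2 = 1 := Nat.odd_iff.mp hko
  set c := (T - k + 3)/2 with hc
  set x : ℕ → ℕ := fun i => if i = k-1 then T-1 else if i % 2 = 0 then i/2 else c + i/2
    with hxdef
  have hxK : x (k-1) = T-1 := by simp [hxdef]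
  have hxE : ∀ i, i ≠ k-1 → i % 2 = 0 → x i = i/2 := by
    intro i h he; simp only [hxdef]; rw [if_neg h, if_pos he]
  have hxO : ∀ i, i ≠ k-1 → i % 2 = 1 → x i = c + i/2 := by
    intro i h ho; simp only [hxdef]; rw [if_neg h, if_neg (by omega)]
  have hv : ∀ i, i < k → (x i = T-1 ∧ i = k-1) ∨
      (x i = i/2 ∧ i % 2 = 0 ∧ i ≤ k-2) ∨ (x i = c + i/2 ∧ i % 2 = 1 ∧ i ≤ k-2) := by
    intro i hi
    by_cases h1 : i = k-1
    · exact Or.inl ⟨by rw [h1, hxK], h1⟩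
    · by_cases h2 : i % 2 = 0
      · exact Or.inr (Or.inl ⟨hxE i h1 h2, h2, by omega⟩)
      · exact Or.inr (Or.inr ⟨hxO i h1 (by omega), by omega, by omega⟩)
  have hxlt : ∀ i, i < k → x i < T := by
    intro i hi
    rcases hv i hi with ⟨h, _⟩ | ⟨h, h2, h3⟩ | ⟨h, h2, h3⟩ <;> omega
  have hxinj : ∀ i j, i < k → j < k → x i = x j → i = j := by
    intro i j hi hj hij
    rcases hv i hi with ⟨h, _⟩ | ⟨h, _, _⟩ | ⟨h, _, _⟩ <;>
      rcases hv j hj with ⟨h', _⟩ | ⟨h', _, _⟩ | ⟨h', _, _⟩ <;> omega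
  -- chord data
  have hchordData : ∀ i, i < k-1 → ∃ a b,
      ((x i = a ∧ x (i+1) = b) ∨ (x i = b ∧ x (i+1) = a)) ∧ a + 2 ≤ b ∧ b < T ∧
        (t - k ≤ 2*(b - a + 1)) ∧ (b - a + 1 ≤ t) ∧ ¬(a = 0 ∧ b = T - 1) := by
    intro i hi
    rcases hv i (by omega) with ⟨h, he⟩ | ⟨h, h2, h3⟩ | ⟨h, h2, h3⟩
    · omega
    · -- i even, so i+1 odd and i+1 ≠ k-1
      rcases hv (i+1) (by omega) with ⟨h', he'⟩ | ⟨h', h2', _⟩ | ⟨h', _, _⟩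
      · omega
      · omega
      · exact ⟨i/2, c + (i+1)/2, Or.inl ⟨h, h'⟩, by omega, by omega, by omega,
          by omega, by omega⟩
    · -- i odd: i+1 even: either i+1 = k-1 or not
      rcases hv (i+1) (by omega) with ⟨h', he'⟩ | ⟨h', h2', h3'⟩ | ⟨h', h2', _⟩
      · exact ⟨c + i/2, T-1, Or.inl ⟨h, h'⟩, by omega, by omega, by omega,
          by omega, by omega⟩
      · exact ⟨(i+1)/2, c + i/2, Or.inr ⟨h, h'⟩, by omega, by omega, by omega,
          by omega, by omega⟩
      · omega
  set e0 : Sym2 ℕ := s(π 0, π (T-1)) with he0def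
  set Lr : List (Sym2 ℕ) := (List.range (k-1)).map (fun i => s(π (x i), π (x (i+1))))
    with hLrdef
  have hLr_mem : ∀ e, e ∈ Lr → ∃ i, i < k-1 ∧ e = s(π (x i), π (x (i+1))) := by
    intro e he
    rw [hLrdef, List.mem_map] at he
    obtain ⟨i, hi, rfl⟩ := he
    exact ⟨i, List.mem_range.mp hi, rfl⟩
  have hLr_len : Lr.length = k - 1 := by rw [hLrdef]; simp
  have hmaster := master init
    (fun B => RedCopy (cycleGraph k) B ∨
      ∃ ℓ, 3 ≤ ℓ ∧ t - k ≤ 2*ℓ ∧ ℓ ≤ t ∧ BlueCopy (cycleGraph ℓ) B)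
    hfin e0 Lr [] 0
    (by -- e0 not diag
      rw [he0def, Sym2.mk_isDiag_iff]
      intro h
      have := hinj 0 (T-1) (by omega) (by omega) h
      omega)
    (hfresh 0 (T-1) (by omega) (by omega) (by omega))
    (by -- list elements not diag
      rintro e (he | he)
      · obtain ⟨i, hi, rfl⟩ := hLr_mem e he
        obtain ⟨a, b, hab, h2, h3, _⟩ := hchordData i hi
        rw [Sym2.mk_isDiag_iff]
        intro h
        have := hinj (x i) (x (i+1)) (hxlt i (by omega)) (hxlt (i+1) (by omega)) h
        omega
      · simp at he)
    (by -- list elements fresh and ≠ e0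
      rintro e (he | he)
      · obtain ⟨i, hi, rfl⟩ := hLr_mem e he
        obtain ⟨a, b, hab, h2, h3, _, _, h6⟩ := hchordData i hi
        constructor
        · rcases hab with ⟨ha, hb⟩ | ⟨ha, hb⟩
          · rw [ha, hb]; exact hfresh a b (by omega) h3 h2
          · rw [ha, hb, Sym2.eq_swap]; exact hfresh a b (by omega) h3 h2
        · intro hcon
          rw [he0def] at hcon
          have := sym2_pi_eq π T hinj (hxlt i (by omega)) (hxlt (i+1) (by omega))
            (by omega) (by omega) hcon
          rcases hab with ⟨ha, hb⟩ | ⟨ha, hb⟩ <;> omega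
      · simp at he)
    (by -- Lr nodup
      rw [hLrdef]
      refine List.Nodup.map_on ?_ List.nodup_range
      intro i hi j hj hij
      rw [List.mem_range] at hi hj
      have := sym2_pi_eq π T hinj (hxlt i (by omega)) (hxlt (i+1) (by omega))
        (hxlt j (by omega)) (hxlt (j+1) (by omega)) hij
      rcases this with ⟨h1, h2⟩ | ⟨h1, h2⟩
      · exact hxinj i j (by omega) (by omega) h1
      · have e1 := hxinj i (j+1) (by omega) (by omega) h1
        have e2 := hxinj (i+1) j (by omega) (by omega) h2
        omega)
    (List.nodup_nil)
    (by -- HWr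
      intro X hX
      rcases Set.eq_empty_or_nonempty X with rfl | ⟨e, heX⟩
      · left
        show HasCopy (cycleGraph k) (fromEdgeSet _)
        refine cycle_copy _ k hk (fun i => π (x i)) ?_ ?_ ?_
        · intro i j hi hj hij
          exact hxinj i j hi hj (hinj _ _ (hxlt i hi) (hxlt j hj) hij)
        · intro i hi
          right
          refine ⟨?_, by simp⟩
          rw [hLrdef]
          simp only [Set.mem_setOf_eq, List.mem_map, List.mem_range]
          exact ⟨i, by omega, rfl⟩
        · left; right
          have h0 : x 0 = 0 := hxE 0 (by omega) (by omega)
          show s(π (x (k-1)), π (x 0)) ∈ ({e0} : Set (Sym2 ℕ))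
          rw [hxK, h0, Sym2.eq_swap, he0def]
          rfl
      · right
        have heL := hX heX
        simp only [Set.mem_setOf_eq] at heL
        obtain ⟨i, hi, rfl⟩ := hLr_mem _ heL
        obtain ⟨a, b, hab, h2, h3, h4, h5, _⟩ := hchordData i hi
        have hpath : ∀ j, a ≤ j → j + 1 ≤ b → s(π j, π (j+1)) ∈ init.2 ∪ X := by
          intro j hj1 hj2
          exact Or.inl (hblue j (by omega))
        have hch : s(π a, π b) ∈ init.2 ∪ X := by
          right
          rcases hab with ⟨ha, hb⟩ | ⟨ha, hb⟩
          · rw [← ha, ← hb]; exact heX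
          · rw [Sym2.eq_swap, ← ha, ← hb]; exact heX
        obtain ⟨l, hl1, hl2, hl3, hl4⟩ :=
          blue_cycle_exists (init.2 ∪ X) π T t k a b h2 h3 hinj hpath hch h4 h5
        exact ⟨l, hl1, hl2, hl3, hl4⟩)
    (by -- HWb
      intro X hX
      right
      refine ⟨T, by omega, by omega, hTt, ?_⟩
      show HasCopy (cycleGraph T) (fromEdgeSet _)
      refine cycle_copy _ T (by omega) π hinj ?_ ?_
      · intro i hi
        exact Or.inl (Or.inl (hblue i hi))
      · left; right
        show s(π (T-1), π 0) ∈ ({e0} : Set (Sym2 ℕ))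
        rw [Sym2.eq_swap, he0def]
        rfl)
  rw [hLr_len] at hmaster
  refine wins_mono init _ ?_ hmaster
  simp
  omega


lemma subset_path_finite (w : ℕ → ℕ) (t : ℕ) (R : Set (Sym2 ℕ))
    (h : ∀ e ∈ R, ∃ i, i + 1 < t ∧ e = s(w i, w (i+1))) : R.Finite := by
  refine Set.Finite.subset (Set.Finite.image (fun i => s(w i, w (i+1)))
    (Set.finite_Iio t)) ?_
  intro e he
  obtain ⟨i, hi, rfl⟩ := h e he
  exact ⟨i, Set.mem_Iio.mpr (by omega), rfl⟩

/-- Case β : a single red edge `w s – w (s+1)` with `1 ≤ s` and `2s+2 ≤ t`. -/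
lemma case_beta (k t s : ℕ) (hk : 3 ≤ k) (hko : Odd k) (ht : 2*k ≤ t)
    (hs1 : 1 ≤ s) (hs2 : 2*s + 2 ≤ t)
    (w : ℕ → ℕ) (hw : ∀ i j, i < t → j < t → w i = w j → i = j) :
    BuilderWinsIn
      ({s(w s, w (s+1))}, {e | ∃ i, i + 1 < t ∧ i ≠ s ∧ e = s(w i, w (i+1))})
      (fun B => RedCopy (cycleGraph k) B ∨
        ∃ ℓ, 3 ≤ ℓ ∧ t - k ≤ 2*ℓ ∧ ℓ ≤ t ∧ BlueCopy (cycleGraph ℓ) B) (k+1) := by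
  have hk2 : k % 2 = 1 := Nat.odd_iff.mp hko
  set R0 : Set (Sym2 ℕ) := {s(w s, w (s+1))} with hR0
  set B0 : Set (Sym2 ℕ) := {e | ∃ i, i + 1 < t ∧ i ≠ s ∧ e = s(w i, w (i+1))} with hB0
  set init : Board := (R0, B0) with hinit
  have hinit1 : init.1 = R0 := rfl
  have hinit2 : init.2 = B0 := rfl
  -- freshness of non-adjacent pairs
  have hfreshW : ∀ a b, a < t → b < t → a + 2 ≤ b →
      s(w a, w b) ∉ Board.colored init := by
    intro a b ha hb hab hmem
    rw [Board.colored] at hmem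
    have : ∃ i, i + 1 < t ∧ s(w a, w b) = s(w i, w (i+1)) := by
      rcases hmem with hmem | hmem
      · exact ⟨s, by omega, hmem⟩
      · obtain ⟨i, hi1, _, he⟩ := hmem
        exact ⟨i, hi1, he⟩
    obtain ⟨i, hi1, he⟩ := this
    rcases sym2_pi_eq w t hw ha hb (by omega) (by omega) he with ⟨h1, h2⟩ | ⟨h1, h2⟩ <;>
      omega
  have hfin : (Board.colored init).Finite := by
    apply subset_path_finite w t
    intro e he
    rw [Board.colored] at he
    rcases he with he | he
    · exact ⟨s, by omega, he⟩
    · obtain ⟨i, h1, _, h3⟩ := he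
      exact ⟨i, h1, h3⟩
  -- the first edge
  set e0 : Sym2 ℕ := s(w s, w (t-1)) with he0def
  -- the red-branch chain
  set x : ℕ → ℕ := fun i =>
    if i = 0 then s else if i % 2 = 1 then s + 1 + i/2 else t - 1 - (k-1-i)/2 with hxdef
  have hx0 : x 0 = s := by simp [hxdef]
  have hxO : ∀ i, i % 2 = 1 → x i = s + 1 + i/2 := by
    intro i h; simp only [hxdef]; rw [if_neg (by omega), if_pos h]
  have hxE : ∀ i, i ≠ 0 → i % 2 = 0 → x i = t - 1 - (k-1-i)/2 := by
    intro i h h2; simp only [hxdef]; rw [if_neg h, if_neg (by omega)]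
  have hxv : ∀ i, i < k → (i = 0 ∧ x i = s) ∨
      (i % 2 = 1 ∧ x i = s + 1 + i/2 ∧ i ≤ k-2) ∨
      (2 ≤ i ∧ i % 2 = 0 ∧ x i = t - 1 - (k-1-i)/2) := by
    intro i hi
    by_cases h1 : i = 0
    · subst h1; exact Or.inl ⟨rfl, hx0⟩
    · by_cases h2 : i % 2 = 1
      · exact Or.inr (Or.inl ⟨h2, hxO i h2, by omega⟩)
      · exact Or.inr (Or.inr ⟨by omega, by omega, hxE i h1 (by omega)⟩)
  have hxlt : ∀ i, i < k → x i < t := by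
    intro i hi
    rcases hxv i hi with ⟨_, h⟩ | ⟨_, h, h3⟩ | ⟨_, _, h⟩ <;> omega
  have hxinj : ∀ i j, i < k → j < k → x i = x j → i = j := by
    intro i j hi hj hij
    rcases hxv i hi with ⟨h1, h⟩ | ⟨h1, h, h3⟩ | ⟨h0, h1, h⟩ <;>
      rcases hxv j hj with ⟨h1', h'⟩ | ⟨h1', h', h3'⟩ | ⟨h0', h1', h'⟩ <;> omega
  -- chord data for the red-branch chain, cycle edges i, i+1 for 1 ≤ i ≤ k-2
  have hchordData : ∀ i, 1 ≤ i → i ≤ k-2 → ∃ a b,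
      ((x i = a ∧ x (i+1) = b) ∨ (x i = b ∧ x (i+1) = a)) ∧
      s + 1 ≤ a ∧ a + 2 ≤ b ∧ b < t ∧ (t - k ≤ 2*(b - a + 1)) ∧ (b - a + 1 ≤ t) := by
    intro i hi1 hi2
    rcases hxv i (by omega) with ⟨h1, h⟩ | ⟨h1, h, h3⟩ | ⟨h0, h1, h⟩
    · omega
    · -- i odd, i+1 even ≥ 2
      rcases hxv (i+1) (by omega) with ⟨h1', h'⟩ | ⟨h1', h', h3'⟩ | ⟨h0', h1', h'⟩
      · omega
      · omega
      · exact ⟨s + 1 + i/2, t - 1 - (k-2-i)/2, Or.inl ⟨h, by rw [h']; congr 1; omega⟩,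
          by omega, by omega, by omega, by omega, by omega⟩
    · -- i even ≥ 2, i+1 odd
      rcases hxv (i+1) (by omega) with ⟨h1', h'⟩ | ⟨h1', h', h3'⟩ | ⟨h0', h1', h'⟩
      · omega
      · exact ⟨s + 1 + (i+1)/2, t - 1 - (k-1-i)/2, Or.inr ⟨h, h'⟩,
          by omega, by omega, by omega, by omega, by omega⟩
      · omega
  set Lr : List (Sym2 ℕ) := (List.range (k-2)).map
    (fun j => s(w (x (j+1)), w (x (j+2)))) with hLrdef
  have hLr_mem : ∀ e, e ∈ Lr → ∃ i, 1 ≤ i ∧ i ≤ k-2 ∧ e = s(w (x i), w (x (i+1))) := by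
    intro e he
    rw [hLrdef, List.mem_map] at he
    obtain ⟨j, hj, rfl⟩ := he
    rw [List.mem_range] at hj
    exact ⟨j+1, by omega, by omega, by rw [show j + 1 + 1 = j + 2 by omega]⟩
  have hLr_len : Lr.length = k - 2 := by rw [hLrdef]; simp
  -- the blue-branch reordered path
  set σ : ℕ → ℕ := fun p => if p ≤ s then p else t + s - p with hσdef
  have hσlo : ∀ p, p ≤ s → σ p = p := by intro p h; simp only [hσdef]; rw [if_pos h]
  have hσhi : ∀ p, s < p → σ p = t + s - p := by
    intro p h; simp only [hσdef]; rw [if_neg (by omega)]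
  have hσlt : ∀ p, p < t → σ p < t := by
    intro p h
    by_cases h1 : p ≤ s
    · rw [hσlo p h1]; omega
    · rw [hσhi p (by omega)]; omega
  have hσinj : ∀ p q, p < t → q < t → σ p = σ q → p = q := by
    intro p q hp hq hpq
    by_cases h1 : p ≤ s <;> by_cases h2 : q ≤ s
    · rw [hσlo p h1, hσlo q h2] at hpq; omega
    · rw [hσlo p h1, hσhi q (by omega)] at hpq; omega
    · rw [hσhi p (by omega), hσlo q h2] at hpq; omega
    · rw [hσhi p (by omega), hσhi q (by omega)] at hpq; omega
  set π' : ℕ → ℕ := fun p => w (σ p) with hπ'def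
  have hπ'inj : ∀ p q, p < t → q < t → π' p = π' q → p = q := by
    intro p q hp hq h
    exact hσinj p q hp hq (hw _ _ (hσlt p hp) (hσlt q hq) h)
  -- the edges of the reordered path are blue or e0
  have hQ : ∀ i, i + 1 < t → s(π' i, π' (i+1)) ∈ B0 ∪ {e0} := by
    intro i hi
    rcases Nat.lt_trichotomy i s with h | h | h
    · left
      rw [hπ'def]
      simp only
      rw [hσlo i (by omega), hσlo (i+1) (by omega)]
      exact ⟨i, by omega, by omega, rfl⟩
    · right
      subst h
      rw [hπ'def]
      simp only
      rw [hσlo i (by omega), hσhi (i+1) (by omega),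
        show t + i - (i+1) = t - 1 by omega]
      rfl
    · left
      rw [hπ'def]
      simp only
      rw [hσhi i (by omega), hσhi (i+1) (by omega)]
      refine ⟨t + s - (i+1), by omega, by omega, ?_⟩
      rw [show t + s - (i+1) + 1 = t + s - i by omega, Sym2.eq_swap]
  -- freshness of chords on the reordered path
  have hQfresh : ∀ p q, p < t → q < t → p + 2 ≤ q → ¬(p = s ∧ q = t-1) →
      s(π' p, π' q) ∉ Board.colored init ∧ s(π' p, π' q) ≠ e0 := by
    intro p q hp hq hpq hfor
    have hσp := hσlt p hp
    have hσq := hσlt q hq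
    have hvp : (p ≤ s ∧ σ p = p) ∨ (s < p ∧ σ p = t + s - p) := by
      by_cases h : p ≤ s
      · exact Or.inl ⟨h, hσlo p h⟩
      · exact Or.inr ⟨by omega, hσhi p (by omega)⟩
    have hvq : (q ≤ s ∧ σ q = q) ∨ (s < q ∧ σ q = t + s - q) := by
      by_cases h : q ≤ s
      · exact Or.inl ⟨h, hσlo q h⟩
      · exact Or.inr ⟨by omega, hσhi q (by omega)⟩
    constructor
    · intro hmem
      rw [Board.colored] at hmem
      have : ∃ i, i + 1 < t ∧ s(π' p, π' q) = s(w i, w (i+1)) := by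
        rcases hmem with hmem | hmem
        · exact ⟨s, by omega, hmem⟩
        · obtain ⟨i, hi1, _, he⟩ := hmem
          exact ⟨i, hi1, he⟩
      obtain ⟨i, hi1, he⟩ := this
      rcases sym2_pi_eq w t hw hσp hσq (by omega) (by omega) he with ⟨h1, h2⟩ | ⟨h1, h2⟩ <;>
        rcases hvp with ⟨hp1, hp2⟩ | ⟨hp1, hp2⟩ <;> rcases hvq with ⟨hq1, hq2⟩ | ⟨hq1, hq2⟩ <;>
        omega
    · intro hcon
      rw [he0def] at hcon
      rcases sym2_pi_eq w t hw hσp hσq (by omega) (by omega) hcon with ⟨h1, h2⟩ | ⟨h1, h2⟩ <;>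
        rcases hvp with ⟨hp1, hp2⟩ | ⟨hp1, hp2⟩ <;> rcases hvq with ⟨hq1, hq2⟩ | ⟨hq1, hq2⟩ <;>
        omega
  -- the blue-branch cycle on the reordered path
  set c := (t - k + 3)/2 with hc
  set y : ℕ → ℕ := fun i => if i = k-1 then t-1 else if i % 2 = 0 then i/2 else c + i/2
    with hydef
  set z : ℕ → ℕ := fun i => if i = k-1 then 0 else i+1 with hzdef
  have hyK : y (k-1) = t-1 := by simp [hydef]
  have hyE : ∀ i, i ≠ k-1 → i % 2 = 0 → y i = i/2 := by
    intro i h he; simp only [hydef]; rw [if_neg h, if_pos he]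
  have hyO : ∀ i, i ≠ k-1 → i % 2 = 1 → y i = c + i/2 := by
    intro i h ho; simp only [hydef]; rw [if_neg h, if_neg (by omega)]
  have hyv : ∀ i, i < k → (y i = t-1 ∧ i = k-1) ∨
      (y i = i/2 ∧ i % 2 = 0 ∧ i ≤ k-2) ∨ (y i = c + i/2 ∧ i % 2 = 1 ∧ i ≤ k-2) := by
    intro i hi
    by_cases h1 : i = k-1
    · exact Or.inl ⟨by rw [h1, hyK], h1⟩
    · by_cases h2 : i % 2 = 0
      · exact Or.inr (Or.inl ⟨hyE i h1 h2, h2, by omega⟩)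
      · exact Or.inr (Or.inr ⟨hyO i h1 (by omega), by omega, by omega⟩)
  have hylt : ∀ i, i < k → y i < t := by
    intro i hi
    rcases hyv i hi with ⟨h, _⟩ | ⟨h, h2, h3⟩ | ⟨h, h2, h3⟩ <;> omega
  have hyinj : ∀ i j, i < k → j < k → y i = y j → i = j := by
    intro i j hi hj hij
    rcases hyv i hi with ⟨h, _⟩ | ⟨h, _, _⟩ | ⟨h, _, _⟩ <;>
      rcases hyv j hj with ⟨h', _⟩ | ⟨h', _, _⟩ | ⟨h', _, _⟩ <;> omega
  have hzlt : ∀ i, i < k → z i < k := by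
    intro i hi; simp only [hzdef]; split <;> omega
  have hz : ∀ i, i + 1 < k → z i = i + 1 := by
    intro i hi; simp only [hzdef]; rw [if_neg (by omega)]
  have hzK : z (k-1) = 0 := by simp [hzdef]
  have hyData : ∀ i, i < k → ∃ a b,
      ((y i = a ∧ y (z i) = b) ∨ (y i = b ∧ y (z i) = a)) ∧ a + 2 ≤ b ∧ b < t ∧
        (t - k ≤ 2*(b - a + 1)) ∧ (b - a + 1 ≤ t) ∧ ¬(a = s ∧ b = t - 1) := by
    intro i hi
    by_cases hik : i = k-1
    · refine ⟨0, t-1, ?_, by omega, by omega, by omega, by omega, by omega⟩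
      right
      subst hik
      rw [hzK, hyK]
      exact ⟨rfl, hyE 0 (by omega) (by omega)⟩
    · rw [hz i (by omega)] at *
      have hz' : z i = i + 1 := hz i (by omega)
      rcases hyv i (by omega) with ⟨h, he⟩ | ⟨h, h2, h3⟩ | ⟨h, h2, h3⟩
      · omega
      · -- i even, i+1 odd ≠ k-1
        rcases hyv (i+1) (by omega) with ⟨h', he'⟩ | ⟨h', h2', _⟩ | ⟨h', _, _⟩
        · omega
        · omega
        · exact ⟨i/2, c + (i+1)/2, Or.inl ⟨h, h'⟩, by omega,
            by omega, by omega, by omega, by omega⟩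
      · -- i odd
        rcases hyv (i+1) (by omega) with ⟨h', he'⟩ | ⟨h', h2', h3'⟩ | ⟨h', h2', _⟩
        · exact ⟨c + i/2, t-1, Or.inl ⟨h, h'⟩, by omega, by omega,
            by omega, by omega, by omega⟩
        · exact ⟨(i+1)/2, c + i/2, Or.inr ⟨h, h'⟩, by omega,
            by omega, by omega, by omega, by omega⟩
        · omega
  set Lb : List (Sym2 ℕ) := (List.range k).map
    (fun i => s(π' (y i), π' (y (z i)))) with hLbdef
  have hLb_mem : ∀ e, e ∈ Lb → ∃ i, i < k ∧ e = s(π' (y i), π' (y (z i))) := by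
    intro e he
    rw [hLbdef, List.mem_map] at he
    obtain ⟨i, hi, rfl⟩ := he
    exact ⟨i, List.mem_range.mp hi, rfl⟩
  have hLb_len : Lb.length = k := by rw [hLbdef]; simp
  have hmaster := master init
    (fun B => RedCopy (cycleGraph k) B ∨
      ∃ ℓ, 3 ≤ ℓ ∧ t - k ≤ 2*ℓ ∧ ℓ ≤ t ∧ BlueCopy (cycleGraph ℓ) B)
    hfin e0 Lr Lb 0
    (by -- e0 not diag
      rw [he0def, Sym2.mk_isDiag_iff]
      intro h
      have := hw s (t-1) (by omega) (by omega) h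
      omega)
    (hfreshW s (t-1) (by omega) (by omega) (by omega))
    (by -- list elements not diag
      rintro e (he | he)
      · obtain ⟨i, hi1, hi2, rfl⟩ := hLr_mem e he
        obtain ⟨a, b, hab, h1, h2, h3, _⟩ := hchordData i hi1 hi2
        rw [Sym2.mk_isDiag_iff]
        intro h
        have := hw (x i) (x (i+1)) (hxlt i (by omega)) (hxlt (i+1) (by omega)) h
        have := hxinj i (i+1) (by omega) (by omega) this
        omega
      · obtain ⟨i, hi, rfl⟩ := hLb_mem e he
        obtain ⟨a, b, hab, h1, h2, _⟩ := hyData i hi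
        rw [Sym2.mk_isDiag_iff]
        intro h
        have h' := hπ'inj (y i) (y (z i)) (hylt i hi) (hylt (z i) (hzlt i hi)) h
        omega)
    (by -- list elements fresh and ≠ e0
      rintro e (he | he)
      · obtain ⟨i, hi1, hi2, rfl⟩ := hLr_mem e he
        obtain ⟨a, b, hab, h1, h2, h3, _⟩ := hchordData i hi1 hi2
        constructor
        · rcases hab with ⟨ha, hb⟩ | ⟨ha, hb⟩
          · rw [ha, hb]; exact hfreshW a b (by omega) h3 h2
          · rw [ha, hb, Sym2.eq_swap]; exact hfreshW a b (by omega) h3 h2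
        · intro hcon
          rw [he0def] at hcon
          have := sym2_pi_eq w t hw (hxlt i (by omega)) (hxlt (i+1) (by omega))
            (by omega) (by omega) hcon
          rcases hab with ⟨ha, hb⟩ | ⟨ha, hb⟩ <;> omega
      · obtain ⟨i, hi, rfl⟩ := hLb_mem e he
        obtain ⟨a, b, hab, h1, h2, _, _, h5⟩ := hyData i hi
        have hfr := hQfresh a b (by omega) h2 h1 h5
        rcases hab with ⟨ha, hb⟩ | ⟨ha, hb⟩
        · rw [ha, hb]; exact hfr
        · rw [ha, hb, Sym2.eq_swap]; exact hfr)
    (by -- Lr nodup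
      rw [hLrdef]
      refine List.Nodup.map_on ?_ List.nodup_range
      intro i hi j hj hij
      rw [List.mem_range] at hi hj
      have := sym2_pi_eq w t hw (hxlt (i+1) (by omega)) (hxlt (i+2) (by omega))
        (hxlt (j+1) (by omega)) (hxlt (j+2) (by omega)) hij
      rcases this with ⟨h1, h2⟩ | ⟨h1, h2⟩
      · have := hxinj (i+1) (j+1) (by omega) (by omega) h1
        omega
      · have e1 := hxinj (i+1) (j+2) (by omega) (by omega) h1
        have e2 := hxinj (i+2) (j+1) (by omega) (by omega) h2
        omega)
    (by -- Lb nodup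
      rw [hLbdef]
      refine List.Nodup.map_on ?_ List.nodup_range
      intro i hi j hj hij
      rw [List.mem_range] at hi hj
      have := sym2_pi_eq π' t hπ'inj (hylt i hi) (hylt (z i) (hzlt i hi))
        (hylt j hj) (hylt (z j) (hzlt j hj)) hij
      rcases this with ⟨h1, h2⟩ | ⟨h1, h2⟩
      · exact hyinj i j hi hj h1
      · have e1 := hyinj i (z j) hi (hzlt j hj) h1
        have e2 := hyinj (z i) j (hzlt i hi) hj h2
        by_cases hik : i = k-1 <;> by_cases hjk : j = k-1
        · omega
        · subst hik
          rw [hzK] at e2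
          rw [hz j (by omega)] at e1
          omega
        · subst hjk
          rw [hzK] at e1
          rw [hz i (by omega)] at e2
          omega
        · rw [hz j (by omega)] at e1
          rw [hz i (by omega)] at e2
          omega)
    (by -- HWr
      intro X hX
      rcases Set.eq_empty_or_nonempty X with rfl | ⟨e, heX⟩
      · left
        show HasCopy (cycleGraph k) (fromEdgeSet _)
        refine cycle_copy _ k hk (fun i => w (x i)) ?_ ?_ ?_
        · intro i j hi hj hij
          exact hxinj i j hi hj (hw _ _ (hxlt i hi) (hxlt j hj) hij)
        · intro i hi
          by_cases h0 : i = 0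
          · subst h0
            left; left
            have hx1 : x 1 = s + 1 := by rw [hxO 1 (by norm_num)]
            show s(w (x 0), w (x 1)) ∈ R0
            rw [hx0, hx1]
            rfl
          · right
            refine ⟨?_, by simp⟩
            rw [hLrdef]
            simp only [Set.mem_setOf_eq, List.mem_map, List.mem_range]
            refine ⟨i-1, by omega, ?_⟩
            rw [show i - 1 + 1 = i by omega, show i - 1 + 2 = i + 1 by omega]
        · left; right
          have hxK : x (k-1) = t-1 := by
            rw [hxE (k-1) (by omega) (by omega)]; omega
          show s(w (x (k-1)), w (x 0)) ∈ ({e0} : Set (Sym2 ℕ))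
          rw [hxK, hx0, Sym2.eq_swap, he0def]
          rfl
      · right
        have heL := hX heX
        simp only [Set.mem_setOf_eq] at heL
        obtain ⟨i, hi1, hi2, rfl⟩ := hLr_mem _ heL
        obtain ⟨a, b, hab, h1, h2, h3, h4, h5⟩ := hchordData i hi1 hi2
        have hpath : ∀ j, a ≤ j → j + 1 ≤ b → s(w j, w (j+1)) ∈ init.2 ∪ X := by
          intro j hj1 hj2
          left
          exact ⟨j, by omega, by omega, rfl⟩
        have hch : s(w a, w b) ∈ init.2 ∪ X := by
          right
          rcases hab with ⟨ha, hb⟩ | ⟨ha, hb⟩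
          · rw [← ha, ← hb]; exact heX
          · rw [Sym2.eq_swap, ← ha, ← hb]; exact heX
        obtain ⟨l, hl1, hl2, hl3, hl4⟩ :=
          blue_cycle_exists (init.2 ∪ X) w t t k a b h2 h3 hw hpath hch h4 h5
        exact ⟨l, hl1, hl2, hl3, hl4⟩)
    (by -- HWb
      intro X hX
      rcases Set.eq_empty_or_nonempty X with rfl | ⟨e, heX⟩
      · left
        show HasCopy (cycleGraph k) (fromEdgeSet _)
        refine cycle_copy _ k hk (fun i => π' (y i)) ?_ ?_ ?_
        · intro i j hi hj hij
          exact hyinj i j hi hj (hπ'inj _ _ (hylt i hi) (hylt j hj) hij)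
        · intro i hi
          right
          refine ⟨?_, by simp⟩
          rw [hLbdef]
          simp only [Set.mem_setOf_eq, List.mem_map, List.mem_range]
          refine ⟨i, by omega, ?_⟩
          rw [hz i (by omega)]
        · right
          refine ⟨?_, by simp⟩
          rw [hLbdef]
          simp only [Set.mem_setOf_eq, List.mem_map, List.mem_range]
          refine ⟨k-1, by omega, ?_⟩
          rw [hzK]
      · right
        have heL := hX heX
        simp only [Set.mem_setOf_eq] at heL
        obtain ⟨i, hi, rfl⟩ := hLb_mem _ heL
        obtain ⟨a, b, hab, h1, h2, h3, h4, h5⟩ := hyData i hi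
        have hpath : ∀ j, a ≤ j → j + 1 ≤ b → s(π' j, π' (j+1)) ∈ (init.2 ∪ {e0}) ∪ X := by
          intro j hj1 hj2
          exact Or.inl (hQ j (by omega))
        have hch : s(π' a, π' b) ∈ (init.2 ∪ {e0}) ∪ X := by
          right
          rcases hab with ⟨ha, hb⟩ | ⟨ha, hb⟩
          · rw [← ha, ← hb]; exact heX
          · rw [Sym2.eq_swap, ← ha, ← hb]; exact heX
        obtain ⟨l, hl1, hl2, hl3, hl4⟩ :=
          blue_cycle_exists ((init.2 ∪ {e0}) ∪ X) π' t t k a b h1 h2 hπ'inj hpath hch h3 h4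
        exact ⟨l, hl1, hl2, hl3, hl4⟩)
  rw [hLr_len, hLb_len] at hmaster
  refine wins_mono init _ ?_ hmaster
  omega


/-- The two cases `s = 0` and `1 ≤ s` for a red edge in the left half. -/
lemma case_small (k t s : ℕ) (hk : 3 ≤ k) (hko : Odd k) (ht : 2*k ≤ t)
    (hs2 : 2*s + 2 ≤ t)
    (w : ℕ → ℕ) (hw : ∀ i j, i < t → j < t → w i = w j → i = j) :
    BuilderWinsIn
      ({s(w s, w (s+1))}, {e | ∃ i, i + 1 < t ∧ i ≠ s ∧ e = s(w i, w (i+1))})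
      (fun B => RedCopy (cycleGraph k) B ∨
        ∃ ℓ, 3 ≤ ℓ ∧ t - k ≤ 2*ℓ ∧ ℓ ≤ t ∧ BlueCopy (cycleGraph ℓ) B) (k+1) := by
  by_cases hs0 : s = 0
  · subst hs0
    -- pendant red edge at the very start : use the blue path w 1, …, w (t-1)
    apply case_alpha k t (t-1) hk hko ht (by omega) (by omega) _ _ (fun i => w (i+1))
    · intro i j hi hj hij
      have := hw (i+1) (j+1) (by omega) (by omega) hij
      omega
    · intro i hi
      exact ⟨i+1, by omega, by omega, rfl⟩
    · intro a b ha hb hab hmem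
      have : ∃ i, i + 1 < t ∧ s(w (a+1), w (b+1)) = s(w i, w (i+1)) := by
        rcases hmem with hmem | hmem
        · exact ⟨0, by omega, hmem⟩
        · obtain ⟨i, h1, _, h3⟩ := hmem
          exact ⟨i, h1, h3⟩
      obtain ⟨i, hi1, he⟩ := this
      rcases sym2_pi_eq w t hw (by omega) (by omega) (by omega) (by omega) he with
        ⟨h1, h2⟩ | ⟨h1, h2⟩ <;> omega
    · apply subset_path_finite w t
      intro e he
      rw [Board.colored] at he
      rcases he with he | he
      · exact ⟨0, by omega, he⟩
      · obtain ⟨i, h1, _, h3⟩ := he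
        exact ⟨i, h1, h3⟩
  · exact case_beta k t s hk hko ht (by omega) hs2 w hw


/-- From an almost blue path to a long blue cycle: for odd `k ≥ 3` and an almost blue
path on `t ≥ 2k` vertices (at most one edge red), within `k + 1` rounds Builder can
force a red `C_k` or a blue cycle of length at least `(t - k)/2` and at most `t`. -/
theorem almost_blue_path_to_cycle (k t : ℕ) (hk : 3 ≤ k) (hko : Odd k)
    (ht : 2 * k ≤ t) (w : ℕ → ℕ)
    (hw : ∀ x y, x < t → y < t → w x = w y → x = y)
    (S : Set ℕ) (hS : S.Subsingleton) :
    BuilderWinsIn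
      ({e | ∃ i : ℕ, i + 1 < t ∧ i ∈ S ∧ e = s(w i, w (i + 1))},
       {e | ∃ i : ℕ, i + 1 < t ∧ i ∉ S ∧ e = s(w i, w (i + 1))})
      (fun B => RedCopy (SimpleGraph.cycleGraph k) B ∨
        ∃ ℓ : ℕ, 3 ≤ ℓ ∧ t - k ≤ 2 * ℓ ∧ ℓ ≤ t ∧
          BlueCopy (SimpleGraph.cycleGraph ℓ) B)
      (k + 1) := by
  by_cases hS1 : ∃ s0 ∈ S, s0 + 1 < t
  · obtain ⟨s0, hs0S, hs0t⟩ := hS1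
    have hSeq : S = {s0} := hS.eq_singleton_of_mem hs0S
    subst hSeq
    have hR : {e | ∃ i : ℕ, i + 1 < t ∧ i ∈ ({s0} : Set ℕ) ∧ e = s(w i, w (i + 1))} =
        {s(w s0, w (s0+1))} := by
      ext e
      simp only [Set.mem_setOf_eq, Set.mem_singleton_iff]
      constructor
      · rintro ⟨i, h1, h2, rfl⟩
        rw [h2]
      · rintro rfl
        exact ⟨s0, hs0t, rfl, rfl⟩
    have hB : {e | ∃ i : ℕ, i + 1 < t ∧ i ∉ ({s0} : Set ℕ) ∧ e = s(w i, w (i + 1))} =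
        {e | ∃ i, i + 1 < t ∧ i ≠ s0 ∧ e = s(w i, w (i+1))} := by
      ext e
      simp only [Set.mem_setOf_eq, Set.mem_singleton_iff]
    rw [hR, hB]
    by_cases hmid : 2 * s0 + 2 ≤ t
    · exact case_small k t s0 hk hko ht hmid w hw
    · -- mirror the path
      set w' : ℕ → ℕ := fun i => w (t - 1 - i) with hw'def
      set s1 := t - 2 - s0 with hs1
      have hw' : ∀ i j, i < t → j < t → w' i = w' j → i = j := by
        intro i j hi hj hij
        have := hw (t-1-i) (t-1-j) (by omega) (by omega) hij
        omega
      have hRm : ({s(w s0, w (s0+1))} : Set (Sym2 ℕ)) = {s(w' s1, w' (s1+1))} := by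
        rw [hw'def, hs1]
        simp only
        rw [show t - 1 - (t - 2 - s0) = s0 + 1 by omega,
          show t - 1 - (t - 2 - s0 + 1) = s0 by omega, Sym2.eq_swap]
      have hBm : {e | ∃ i, i + 1 < t ∧ i ≠ s0 ∧ e = s(w i, w (i+1))} =
          {e | ∃ i, i + 1 < t ∧ i ≠ s1 ∧ e = s(w' i, w' (i+1))} := by
        ext e
        simp only [Set.mem_setOf_eq]
        constructor
        · rintro ⟨i, h1, h2, rfl⟩
          refine ⟨t - 2 - i, by omega, by omega, ?_⟩
          rw [hw'def]
          simp only
          rw [show t - 1 - (t - 2 - i) = i + 1 by omega,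
            show t - 1 - (t - 2 - i + 1) = i by omega, Sym2.eq_swap]
        · rintro ⟨i, h1, h2, rfl⟩
          refine ⟨t - 2 - i, by omega, by omega, ?_⟩
          rw [hw'def]
          simp only
          rw [show t - 1 - (i + 1) = t - 2 - i by omega,
            show t - 2 - i + 1 = t - 1 - i by omega, Sym2.eq_swap]
      rw [hRm, hBm]
      exact case_small k t s1 hk hko ht (by omega) w' hw'
  · -- no red edge at all
    push_neg at hS1
    apply case_alpha k t t hk hko ht le_rfl (by omega) _ _ w hw
    · intro i hi
      exact ⟨i, hi, fun hmem => by have := hS1 i hmem; omega, rfl⟩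
    · intro a b ha hb hab hmem
      have : ∃ i, i + 1 < t ∧ s(w a, w b) = s(w i, w (i+1)) := by
        rcases hmem with hmem | hmem
        · obtain ⟨i, h1, _, h3⟩ := hmem
          exact ⟨i, h1, h3⟩
        · obtain ⟨i, h1, _, h3⟩ := hmem
          exact ⟨i, h1, h3⟩
      obtain ⟨i, hi1, he⟩ := this
      rcases sym2_pi_eq w t hw ha hb (by omega) (by omega) he with ⟨h1, h2⟩ | ⟨h1, h2⟩ <;>
        omega
    · apply subset_path_finite w t
      intro e he
      rw [Board.colored] at he
      rcases he with he | he
      · obtain ⟨i, h1, _, h3⟩ := he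
        exact ⟨i, h1, h3⟩
      · obtain ⟨i, h1, _, h3⟩ := he
        exact ⟨i, h1, h3⟩
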